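/- Let −∞ < t₁ < t₂ < ∞ and let Q : [t₁,t₂] → M₃(ℝ) be continuous with Q(t) ∈ 𝒬 for every t. Suppose Q̄ = P(m̄) for some m̄ ∈ 𝕊², that 0 < ε < √2, and that ‖Q(t) − Q̄‖ ≤ ε|s| for all t ∈ [t₁,t₂] (Frobenius norm). Then there exists a continuous map n⁺ : [t₁,t₂] → 𝕊² with Q(t) = P(n⁺(t)) and |n⁺(t) − m̄| ≤ ε for all t ∈ [t₁,t₂], while the opposite lifting n⁻ = −n⁺ satisfies Q(t) = P(n⁻(t)) and |n⁻(t) + m̄| ≤ ε for all t ∈ [t₁,t₂]. -/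

import Mathlib

/-- `P(n) = s (n⊗n − (1/3) Id)`. -/
noncomputable def Pmat (s : ℝ) (n : Fin 3 → ℝ) : Matrix (Fin 3) (Fin 3) ℝ :=
  s • (Matrix.vecMulVec n n - (1 / 3 : ℝ) • (1 : Matrix (Fin 3) (Fin 3) ℝ))

/-- The Frobenius norm of a 3×3 real matrix. -/
noncomputable def frob (M : Matrix (Fin 3) (Fin 3) ℝ) : ℝ :=
  Real.sqrt (∑ i, ∑ j, (M i j) ^ 2)

private lemma Pmat_entry (s : ℝ) (n : Fin 3 → ℝ) (i j : Fin 3) :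
    Pmat s n i j = s * (n i * n j - (1/3) * (if i = j then 1 else 0)) := by
  simp only [Pmat, Matrix.smul_apply, Matrix.sub_apply, Matrix.vecMulVec_apply,
    Matrix.one_apply, smul_eq_mul]

private lemma enorm_eq (x : EuclideanSpace ℝ (Fin 3)) :
    ‖x‖ = Real.sqrt (∑ i, (x i)^2) := by
  rw [EuclideanSpace.norm_eq]
  congr 1
  refine Finset.sum_congr rfl fun i _ => ?_
  rw [Real.norm_eq_abs, sq_abs]

private lemma enorm_one_sum {x : EuclideanSpace ℝ (Fin 3)} (h : ‖x‖ = 1) :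
    ∑ i, (x i)^2 = 1 := by
  rw [enorm_eq x] at h
  exact Real.sqrt_eq_one.mp h

private lemma sum_sq_identity (n m : Fin 3 → ℝ) :
    (∑ i, ∑ j, (n i * n j - m i * m j)^2)
      = (∑ i, (n i)^2)^2 - 2*(∑ i, n i * m i)^2 + (∑ i, (m i)^2)^2 := by
  simp only [Fin.sum_univ_three]
  ring

/-- if `Q` stays within Frobenius distance `ε|s|` (with `0 < ε < √2`) of
`Q̄ = P(m̄)`, then one continuous lifting `n⁺` of `Q` satisfies `|n⁺(t) − m̄| ≤ ε` and the
opposite lifting `n⁻ = −n⁺` satisfies `|n⁻(t) + m̄| ≤ ε` for all `t`. -/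
theorem stmt4 (s : ℝ) (hs : s ≠ 0) (hs' : s ∈ Set.Icc (-(1 / 2) : ℝ) 1)
    (t₁ t₂ : ℝ) (ht : t₁ < t₂)
    (Q : Set.Icc t₁ t₂ → Matrix (Fin 3) (Fin 3) ℝ) (hQc : Continuous Q)
    (hQval : ∀ t, ∃ m : EuclideanSpace ℝ (Fin 3), ‖m‖ = 1 ∧ Q t = Pmat s (fun i => m i))
    (mbar : EuclideanSpace ℝ (Fin 3)) (hmbar : ‖mbar‖ = 1)
    (Qbar : Matrix (Fin 3) (Fin 3) ℝ) (hQbar : Qbar = Pmat s (fun i => mbar i))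
    (ε : ℝ) (hε0 : 0 < ε) (hε2 : ε < Real.sqrt 2)
    (hclose : ∀ t, frob (Q t - Qbar) ≤ ε * |s|) :
    ∃ np : Set.Icc t₁ t₂ → EuclideanSpace ℝ (Fin 3),
      Continuous np ∧
      (∀ t, ‖np t‖ = 1 ∧ Q t = Pmat s (fun i => np t i) ∧ ‖np t - mbar‖ ≤ ε) ∧
      (∀ t, Q t = Pmat s (fun i => (-(np t)) i) ∧ ‖-(np t) + mbar‖ ≤ ε) := by
  classical
  have hs2 : (0:ℝ) < s^2 := by positivity
  have hε2' : ε^2 < 2 := by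
    have := (Real.lt_sqrt hε0.le).mp hε2
    linarith
  have hmb : ∑ i, (mbar i)^2 = 1 := enorm_one_sum hmbar
  set nt : Set.Icc t₁ t₂ → Fin 3 → ℝ := fun t i => (hQval t).choose i with hnt_def
  have hntn : ∀ t, ∑ i, (nt t i)^2 = 1 := fun t => enorm_one_sum (hQval t).choose_spec.1
  have hQt : ∀ t, Q t = Pmat s (nt t) := fun t => (hQval t).choose_spec.2
  set d : Set.Icc t₁ t₂ → ℝ := fun t => ∑ i, nt t i * mbar i with hd_def
  -- upper bound via Cauchy-Schwarz
  have hd1 : ∀ t, (d t)^2 ≤ 1 := by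
    intro t
    have h1 := hntn t
    have h2 := hmb
    simp only [hd_def, Fin.sum_univ_three] at h1 h2 ⊢
    nlinarith [sq_nonneg (nt t 0 * mbar 1 - nt t 1 * mbar 0),
      sq_nonneg (nt t 0 * mbar 2 - nt t 2 * mbar 0),
      sq_nonneg (nt t 1 * mbar 2 - nt t 2 * mbar 1)]
  -- lower bound from hclose
  have hd2 : ∀ t, 1 - ε^2/2 ≤ (d t)^2 := by
    intro t
    have hent : ∀ i j, (Q t - Qbar) i j = s * (nt t i * nt t j - mbar i * mbar j) := by
      intro i j
      rw [Matrix.sub_apply, hQt t, hQbar, Pmat_entry, Pmat_entry]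
      ring
    have hS : (∑ i, ∑ j, ((Q t - Qbar) i j)^2) = s^2 * (2 - 2*(d t)^2) := by
      simp only [hent, mul_pow, ← Finset.mul_sum]
      rw [sum_sq_identity (nt t) (fun i => mbar i), hntn t]
      rw [show (∑ i, (mbar i)^2) = 1 from hmb]
      rw [hd_def]
      ring
    have hS0 : (0:ℝ) ≤ ∑ i, ∑ j, ((Q t - Qbar) i j)^2 :=
      Finset.sum_nonneg fun i _ => Finset.sum_nonneg fun j _ => sq_nonneg _
    have hcl := hclose t
    rw [frob] at hcl
    have hsq : (∑ i, ∑ j, ((Q t - Qbar) i j)^2) ≤ (ε * |s|)^2 := by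
      nlinarith [Real.sq_sqrt hS0, Real.sqrt_nonneg (∑ i, ∑ j, ((Q t - Qbar) i j)^2),
        mul_pos hε0 (abs_pos.mpr hs)]
    rw [hS, mul_pow, sq_abs] at hsq
    nlinarith
  have hdpos : ∀ t, 0 < (d t)^2 := fun t => by nlinarith [hd2 t]
  -- the continuous "projected" vector field
  set v : Set.Icc t₁ t₂ → Fin 3 → ℝ :=
    fun t i => ∑ j, ((1/s) * Q t i j + (1/3) * (if i = j then 1 else 0)) * mbar j with hv_def
  have hv : ∀ t i, v t i = nt t i * d t := by
    intro t i
    simp only [hv_def, hd_def, hQt t, Pmat_entry, Fin.sum_univ_three]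
    field_simp
    ring
  set c : Set.Icc t₁ t₂ → ℝ := fun t => ∑ i, mbar i * v t i with hc_def
  have hc : ∀ t, c t = (d t)^2 := by
    intro t
    simp only [hc_def, hv t, hd_def, Fin.sum_univ_three]
    ring
  have hcpos : ∀ t, 0 < c t := fun t => (hc t) ▸ hdpos t
  have hrpos : ∀ t, 0 < Real.sqrt (c t) := fun t => Real.sqrt_pos.mpr (hcpos t)
  set np : Set.Icc t₁ t₂ → EuclideanSpace ℝ (Fin 3) :=
    fun t => (WithLp.equiv 2 (Fin 3 → ℝ)).symm (fun i => (Real.sqrt (c t))⁻¹ * v t i)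
    with hnp_def
  have hnpi : ∀ t i, np t i = (Real.sqrt (c t))⁻¹ * v t i := by
    intro t i
    simp [hnp_def]
  -- continuity
  have hvcont : ∀ i, Continuous fun t => v t i := by
    intro i
    apply continuous_finset_sum
    intro j _
    exact ((continuous_const.mul (hQc.matrix_elem i j)).add continuous_const).mul continuous_const
  have hccont : Continuous c := continuous_finset_sum _ fun i _ => continuous_const.mul (hvcont i)
  have hnpcont : Continuous np := by
    apply (PiLp.continuous_toLp 2 (fun _ : Fin 3 => ℝ)).comp
    exact continuous_pi fun i =>
      ((Real.continuous_sqrt.comp hccont).inv₀ fun t => (hrpos t).ne').mul (hvcont i)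
  -- pointwise facts
  have key : ∀ t, (∀ i j, np t i * np t j = nt t i * nt t j)
      ∧ (∑ i, (np t i)^2 = 1) ∧ (∑ i, np t i * mbar i = Real.sqrt (c t)) := by
    intro t
    have hr2 : (Real.sqrt (c t))^2 = c t := Real.sq_sqrt (hcpos t).le
    have hrne : Real.sqrt (c t) ≠ 0 := (hrpos t).ne'
    set k : ℝ := (Real.sqrt (c t))⁻¹ * d t with hk_def
    have hnpk : ∀ i, np t i = k * nt t i := by
      intro i
      rw [hnpi t i, hv t i, hk_def]
      ring
    have hk2 : k^2 = 1 := by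
      rw [hk_def]
      rw [mul_pow, inv_pow, hr2, hc t]
      exact inv_mul_cancel₀ (hdpos t).ne'
    refine ⟨fun i j => ?_, ?_, ?_⟩
    · rw [hnpk i, hnpk j]
      linear_combination nt t i * nt t j * hk2
    · simp only [hnpk]
      have h1 := hntn t
      simp only [Fin.sum_univ_three] at h1 ⊢
      linear_combination k^2 * h1 + hk2
    · simp only [hnpk]
      have : ∑ i, k * nt t i * mbar i = k * d t := by
        simp only [hd_def, Fin.sum_univ_three]; ring
      rw [this, hk_def]
      have hdd : d t * d t = Real.sqrt (c t) * Real.sqrt (c t) := by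
        linear_combination -hr2 - hc t
      rw [mul_assoc, hdd, ← mul_assoc, inv_mul_cancel₀ hrne, one_mul]
  have hPmatnp : ∀ t, Q t = Pmat s (fun i => np t i) := by
    intro t
    rw [hQt t]
    ext i j
    rw [Pmat_entry, Pmat_entry, (key t).1 i j]
  have hdist : ∀ t, ‖np t - mbar‖ ≤ ε := by
    intro t
    have hr2 : (Real.sqrt (c t))^2 = c t := Real.sq_sqrt (hcpos t).le
    have hrle1 : Real.sqrt (c t) ≤ 1 := by
      rw [show (1:ℝ) = Real.sqrt 1 by simp]
      exact Real.sqrt_le_sqrt (by rw [hc t]; exact hd1 t)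
    have hrge : 1 - ε^2/2 ≤ Real.sqrt (c t) := by
      nlinarith [hrpos t, hr2, hc t, hd2 t]
    have hsum : ∑ i, ((np t - mbar) i)^2 = 2 - 2 * Real.sqrt (c t) := by
      have h1 := (key t).2.1
      have h2 := (key t).2.2
      simp only [PiLp.sub_apply]
      simp only [Fin.sum_univ_three] at h1 h2 hmb ⊢
      linear_combination h1 - 2 * h2 + hmb
    rw [enorm_eq, hsum]
    rw [show ε = Real.sqrt (ε^2) from (Real.sqrt_sq hε0.le).symm]
    exact Real.sqrt_le_sqrt (by nlinarith)
  refine ⟨np, hnpcont, fun t => ⟨?_, hPmatnp t, hdist t⟩, fun t => ⟨?_, ?_⟩⟩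
  · rw [enorm_eq, (key t).2.1]
    simp
  · rw [hPmatnp t]
    ext i j
    rw [Pmat_entry, Pmat_entry]
    simp only [PiLp.neg_apply]
    ring
  · rw [show -(np t) + mbar = -(np t - mbar) by abel, norm_neg]
    exact hdist t
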